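/- Let G be a finite simple graph that is k-connected (k ≥ 1), is not a complete graph on k+1 vertices, and let v be a vertex of G whose neighborhood induces a clique. Then G − v is k-connected. -/

import Mathlib

open SimpleGraph

/-- Rerouting around a simplicial vertex: any walk between vertices distinct from `v`
can be replaced by one avoiding `v`, without using new vertices. -/
lemma avoid_simplicial {V : Type*} {G : SimpleGraph V} {v : V}
    (hv : G.IsClique (G.neighborSet v)) :
    ∀ (n : ℕ) (x y : V) (p : G.Walk x y), p.length = n → x ≠ v → y ≠ v →
      ∃ q : G.Walk x y, v ∉ q.support ∧ ∀ w ∈ q.support, w ∈ p.support := by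
  intro n
  induction n using Nat.strong_induction_on with
  | _ n ih =>
  intro x y p hn hx hy
  cases p with
  | nil => exact ⟨.nil, by simp [Ne.symm hx], by simp⟩
  | @cons _ z _ h q =>
    by_cases hz : z = v
    · cases q with
      | nil => exact absurd hz hy
      | @cons _ w _ h2 q2 =>
        have h2' : G.Adj v w := hz ▸ h2
        have h1' : G.Adj v x := hz ▸ h.symm
        have hw : w ≠ v := fun hwv => G.irrefl (hwv ▸ h2')
        have hlen : q2.length < n := by
          simp only [SimpleGraph.Walk.length_cons] at hn; omega
        obtain ⟨q2', hq2v, hq2sub⟩ := ih q2.length hlen w y q2 rfl hw hy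
        by_cases hxw : x = w
        · subst hxw
          exact ⟨q2', hq2v, fun u hu => by
            simp only [SimpleGraph.Walk.support_cons, List.mem_cons]
            exact Or.inr (Or.inr (hq2sub u hu))⟩
        · have hadj : G.Adj x w := hv (by simpa using h1') (by simpa using h2') hxw
          refine ⟨.cons hadj q2', ?_, ?_⟩
          · simp only [SimpleGraph.Walk.support_cons, List.mem_cons]
            push_neg
            exact ⟨fun hvx => hx hvx.symm, hq2v⟩
          · intro u hu
            simp only [SimpleGraph.Walk.support_cons, List.mem_cons] at hu ⊢
            rcases hu with rfl | hu
            · exact Or.inl rfl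
            · exact Or.inr (Or.inr (hq2sub u hu))
    · have hlen : q.length < n := by
        simp only [SimpleGraph.Walk.length_cons] at hn; omega
      obtain ⟨q', hq'v, hq'sub⟩ := ih q.length hlen z y q rfl hz hy
      refine ⟨.cons h q', ?_, ?_⟩
      · simp only [SimpleGraph.Walk.support_cons, List.mem_cons]
        push_neg
        exact ⟨fun hvx => hx hvx.symm, hq'v⟩
      · intro u hu
        simp only [SimpleGraph.Walk.support_cons, List.mem_cons] at hu ⊢
        rcases hu with rfl | hu
        · exact Or.inl rfl
        · exact Or.inr (hq'sub u hu)

/-- A walk whose support lies in `s` gives a walk in the induced graph on `s`. -/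
lemma walk_induce {V : Type*} {G : SimpleGraph V} {s : Set V} :
    ∀ {x y : V} (p : G.Walk x y), (∀ w ∈ p.support, w ∈ s) →
      ∀ (hx : x ∈ s) (hy : y ∈ s),
      ∃ q : (G.induce s).Walk ⟨x, hx⟩ ⟨y, hy⟩, ∀ w ∈ q.support, (w : V) ∈ p.support := by
  intro x y p
  induction p with
  | nil => intro _ hx hy; exact ⟨.nil, by simp⟩
  | @cons a b c h q ih =>
    intro hsup hx hy
    have hb : b ∈ s := hsup b (by simp)
    obtain ⟨q', hq'⟩ := ih (fun w hw => hsup w (by simp [hw])) hb hy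
    refine ⟨.cons (by simpa using h) q', ?_⟩
    intro w hw
    simp only [SimpleGraph.Walk.support_cons, List.mem_cons] at hw ⊢
    rcases hw with rfl | hw
    · exact Or.inl rfl
    · exact Or.inr (hq' w hw)

/-- If the graph induced on `{x, y}` is connected and `x ≠ y` then `x` and `y` are adjacent. -/
lemma adj_of_induce_pair_connected {V : Type*} {G : SimpleGraph V} {x y : V} (hxy : x ≠ y)
    (h : (G.induce ({x, y} : Set V)).Connected) : G.Adj x y := by
  obtain ⟨p0⟩ := h.preconnected ⟨x, by simp⟩ ⟨y, by simp⟩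
  set p : G.Walk x y := p0.map (SimpleGraph.Embedding.induce ({x, y} : Set V)).toHom with hp
  have hnil : ¬ p.Nil := by
    intro hn
    rw [SimpleGraph.Walk.nil_iff_length_eq] at hn
    have h1 := p.getVert_length
    rw [hn, p.getVert_zero] at h1
    exact hxy h1
  have hadj : G.Adj x (p.getVert 1) := SimpleGraph.Walk.adj_snd hnil
  have hmem : p.getVert 1 ∈ p.support := by
    rw [SimpleGraph.Walk.mem_support_iff_exists_getVert]
    exact ⟨1, rfl, by rw [SimpleGraph.Walk.not_nil_iff_lt_length] at hnil; omega⟩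
  have hsub : ∀ w ∈ p.support, w ∈ ({x, y} : Set V) := by
    intro w hw
    replace hw : w ∈ List.map (SimpleGraph.Embedding.induce (G := G) ({x, y} : Set V)).toHom p0.support := by
      rw [← SimpleGraph.Walk.support_map]; exact hw
    rw [List.mem_map] at hw
    obtain ⟨u, _, rfl⟩ := hw
    exact u.2
  have := hsub _ hmem
  rcases this with h1 | h1
  · exact absurd h1 hadj.ne'
  · rw [Set.mem_singleton_iff] at h1
    rwa [h1] at hadj

/-- A finite simple graph is `k`-connected if it has more than `k` vertices and
deleting any set of fewer than `k` vertices leaves a connected graph. -/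
def KConnected {V : Type*} [Fintype V] [DecidableEq V] (G : SimpleGraph V) (k : ℕ) : Prop :=
  k + 1 ≤ Fintype.card V ∧
    ∀ S : Finset V, S.card < k → (G.induce ((Sᶜ : Finset V) : Set V)).Connected

lemma reachable_congr {W : Type*} {H : SimpleGraph W} {u u' w w' : W}
    (hu : u = u') (hw : w = w') (h : H.Reachable u' w') : H.Reachable u w := by
  subst hu; subst hw; exact h

theorem stmt_16 {V : Type*} [Fintype V] [DecidableEq V] (G : SimpleGraph V) (k : ℕ)
    (hk : 1 ≤ k) (hconn : KConnected G k)
    (hnotcomplete : ¬ (Fintype.card V = k + 1 ∧ G = ⊤))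
    (v : V) (hv : G.IsClique (G.neighborSet v)) :
    KConnected (G.induce ((({v}ᶜ : Finset V) : Set V))) k := by
  classical
  obtain ⟨hcard, hC⟩ := hconn
  -- Step 1: |V| ≥ k + 2.
  have hcard2 : k + 2 ≤ Fintype.card V := by
    rcases lt_or_eq_of_le hcard with h | h
    · omega
    · exfalso
      apply hnotcomplete
      refine ⟨h.symm, ?_⟩
      ext x y
      simp only [top_adj]
      constructor
      · exact fun h' => h'.ne
      · intro hxy
        have h2 : ({x, y} : Finset V).card = 2 := by
          rw [Finset.card_insert_of_notMem (by simp [hxy]), Finset.card_singleton]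
        have hlt : (({x, y} : Finset V)ᶜ).card < k := by
          rw [Finset.card_compl, h2, ← h]; omega
        have hcn := hC _ hlt
        rw [compl_compl] at hcn
        have hset : ((({x, y} : Finset V) : Set V)) = ({x, y} : Set V) := by simp
        rw [hset] at hcn
        exact adj_of_induce_pair_connected hxy hcn
  have hvA : ∀ w : V, w ∈ (({v}ᶜ : Finset V) : Set V) ↔ w ≠ v := by
    intro w; simp
  have hcardA : Fintype.card (({v}ᶜ : Finset V) : Set V) = Fintype.card V - 1 := by
    simp only [Finset.coe_sort_coe, Fintype.card_coe, Finset.card_compl,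
      Finset.card_singleton]
  constructor
  · omega
  intro S hS
  have hS'card : (S.image Subtype.val).card < k := by
    rw [Finset.card_image_of_injective _ Subtype.val_injective]
    exact hS
  have hvS' : v ∉ S.image Subtype.val := by
    intro hmem
    rw [Finset.mem_image] at hmem
    obtain ⟨a, _, ha⟩ := hmem
    have h2 := a.2
    rw [ha, hvA] at h2
    exact h2 rfl
  have hC' := hC _ hS'card
  rw [connected_iff]
  have hmemc : ∀ w : ((({v}ᶜ : Finset V) : Set V)),
      w ∈ ((Sᶜ : Finset _) : Set _) ↔ (w : V) ∉ S.image Subtype.val := by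
    intro w
    simp only [Finset.coe_compl, Set.mem_compl_iff, Finset.mem_coe, Finset.mem_image]
    constructor
    · rintro hw ⟨c, hc, hcx⟩
      exact hw ((Subtype.val_injective hcx : c = w) ▸ hc)
    · intro hw hwS
      exact hw ⟨w, hwS, rfl⟩
  constructor
  swap
  · -- Nonempty
    have hpos : 0 < (Sᶜ : Finset ((({v}ᶜ : Finset V) : Set V))).card := by
      rw [Finset.card_compl, hcardA]
      omega
    obtain ⟨a, ha⟩ := Finset.card_pos.mp hpos
    exact ⟨⟨a, by simpa using ha⟩⟩
  intro a b
  have hxv : ((a : _) : V) ≠ v := (hvA _).mp a.1.2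
  have hyv : ((b : _) : V) ≠ v := (hvA _).mp b.1.2
  have hxS' : ((a : _) : V) ∉ S.image Subtype.val := (hmemc _).mp a.2
  have hyS' : ((b : _) : V) ∉ S.image Subtype.val := (hmemc _).mp b.2
  -- a walk in G from x to y avoiding S'
  obtain ⟨p0⟩ := hC'.preconnected ⟨((a : _) : V), by simpa using hxS'⟩ ⟨((b : _) : V), by simpa using hyS'⟩
  have hp1sub : ∀ w ∈ (p0.map (SimpleGraph.Embedding.induce
      (((S.image Subtype.val)ᶜ : Finset V) : Set V)).toHom).support,
      w ∉ S.image Subtype.val := by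
    intro w hw
    rw [SimpleGraph.Walk.support_map, List.mem_map] at hw
    obtain ⟨u, _, rfl⟩ := hw
    simpa using u.2
  -- avoid v
  obtain ⟨q, hqv, hqsub⟩ := avoid_simplicial hv _ _ _
    (p0.map (SimpleGraph.Embedding.induce _).toHom) rfl hxv hyv
  have hqS' : ∀ w ∈ q.support, w ∉ S.image Subtype.val :=
    fun w hw => hp1sub w (hqsub w hw)
  have hqA : ∀ w ∈ q.support, w ∈ (({v}ᶜ : Finset V) : Set V) := by
    intro w hw
    rw [hvA]
    intro hwv
    exact hqv (hwv ▸ hw)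
  -- lift to G.induce A
  obtain ⟨q2, hq2⟩ := walk_induce q hqA (hqA _ q.start_mem_support) (hqA _ q.end_mem_support)
  -- lift to the double induce
  have hq2sub : ∀ w ∈ q2.support, w ∈ ((Sᶜ : Finset _) : Set _) := by
    intro w hw
    rw [hmemc]
    exact hqS' (w : V) (hq2 w hw)
  obtain ⟨q3, _⟩ := walk_induce q2 hq2sub (hq2sub _ q2.start_mem_support)
    (hq2sub _ q2.end_mem_support)
  have ha : a = ⟨⟨_, hqA _ q.start_mem_support⟩, hq2sub _ q2.start_mem_support⟩ :=
    Subtype.ext (Subtype.ext rfl)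
  have hb : b = ⟨⟨_, hqA _ q.end_mem_support⟩, hq2sub _ q2.end_mem_support⟩ :=
    Subtype.ext (Subtype.ext rfl)
  exact reachable_congr ha hb ⟨q3⟩
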